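/- arXiv:1601.03189 — 3 statements merged into one kernel-verified Lean document; each statement's English description precedes it below -/
import Mathlib

section
/- If D^L is a left derivation and D^R a right derivation of a Leibniz algebra g, then their commutator [D^L, D^R] = D^L∘D^R − D^R∘D^L is a right derivation of g. -/
/-- If `DL` is a left derivation and `DR` a right derivation of a Leibniz
algebra `g`, then the commutator `⁅DL,DR⁆ = DL∘DR - DR∘DL` is a right
derivation of `g`. -/
theorem commutator_leftDer_rightDer_isRightDerivation
    {K : Type*} [Field K] {g : Type*} [AddCommGroup g] [Module K g]
    (B : g →ₗ[K] g →ₗ[K] g)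
    (hleib : ∀ x y z : g, B x (B y z) = B (B x y) z + B y (B x z))
    (DL DR : Module.End K g)
    (hDL : ∀ x y : g, DL (B x y) = B (DL x) y + B x (DL y))
    (hDR : ∀ x y : g, DR (B x y) = B x (DR y) - B y (DR x)) :
    ∀ x y : g, ⁅DL, DR⁆ (B x y) = B x (⁅DL, DR⁆ y) - B y (⁅DL, DR⁆ x) := by
  intro x y
  simp only [Ring.lie_def, LinearMap.sub_apply, LinearMap.add_apply, LinearMap.smul_apply, Module.End.mul_apply,
    hDL, hDR, map_add, map_sub]
  abel
end

section
/- The space Der^L(g) ⊕ Der^R(g) equipped with the bracket [(D^L_1,D^R_1),(D^L_2,D^R_2)]_s = ([D^L_1,D^L_2], [D^L_1,D^R_2]) is a Leibniz algebra. -/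
variable {K : Type*} [Field K] {g : Type*} [AddCommGroup g] [Module K g]

/-- Left derivation of the Leibniz algebra `(g, B)`. -/
def IsLeftDer (B : g →ₗ[K] g →ₗ[K] g) (D : Module.End K g) : Prop :=
  ∀ x y : g, D (B x y) = B (D x) y + B x (D y)

/-- Right derivation of the Leibniz algebra `(g, B)`. -/
def IsRightDer (B : g →ₗ[K] g →ₗ[K] g) (D : Module.End K g) : Prop :=
  ∀ x y : g, D (B x y) = B x (D y) - B y (D x)

/-- The semidirect bracket on `Der^L(g) ⊕ Der^R(g)`:
`[(D^L₁,D^R₁),(D^L₂,D^R₂)]_s = (⁅D^L₁,D^L₂⁆, ⁅D^L₁,D^R₂⁆)`. -/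
def sBracket (D E : Module.End K g × Module.End K g) :
    Module.End K g × Module.End K g :=
  (⁅D.1, E.1⁆, ⁅D.1, E.2⁆)

/-- `(Der^L(g) ⊕ Der^R(g), [·,·]_s)` is a Leibniz algebra: the bracket is
closed on pairs of (left, right) derivations and satisfies the left Leibniz
identity there. -/
theorem semidirect_derL_derR_leibniz
    (B : g →ₗ[K] g →ₗ[K] g)
    (hleib : ∀ x y z : g, B x (B y z) = B (B x y) z + B y (B x z)) :
    (∀ D E : Module.End K g × Module.End K g,
      IsLeftDer B D.1 → IsRightDer B D.2 → IsLeftDer B E.1 → IsRightDer B E.2 →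
      IsLeftDer B (sBracket D E).1 ∧ IsRightDer B (sBracket D E).2) ∧
    (∀ D E F : Module.End K g × Module.End K g,
      IsLeftDer B D.1 → IsRightDer B D.2 → IsLeftDer B E.1 → IsRightDer B E.2 →
      IsLeftDer B F.1 → IsRightDer B F.2 →
      sBracket D (sBracket E F) =
        sBracket (sBracket D E) F + sBracket E (sBracket D F)) := by
  constructor
  · rintro D E hD1 hD2 hE1 hE2
    simp only [IsLeftDer, IsRightDer] at *
    constructor
    · intro x y
      simp only [sBracket, Ring.lie_def, LinearMap.sub_apply, Module.End.mul_apply,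
        hD1, hE1, map_add, map_sub]
      abel
    · intro x y
      simp only [sBracket, Ring.lie_def, LinearMap.sub_apply, Module.End.mul_apply,
        hD1, hE2, map_add, map_sub]
      abel
  · intro D E F _ _ _ _ _ _
    refine Prod.ext ?_ ?_ <;>
      (simp only [sBracket, Prod.fst_add, Prod.snd_add, Ring.lie_def]; noncomm_ring)
end

section
/- Given a non-abelian extension 0 → h → ĝ → g → 0 of Leibniz algebras, the equivalence class of the induced non-abelian 2-cocycle (l,r,ω) does not depend on the choice of splitting σ : g → ĝ: if σ₁, σ₂ are two splittings, then the 2-cocycles they induce are equivalent via φ(x) = σ₁(x) − σ₂(x). -/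
/-- Given a non-abelian extension `0 → h → ĝ →p g → 0` of Leibniz algebras
(here `h = ker p`), the non-abelian 2-cocycles induced by two splittings
`σ₁, σ₂` are equivalent via `φ(x) = σ₁(x) - σ₂(x)`: `φ` takes values in `h`,
`l¹_x - l²_x = ad^L_{φ(x)}`, `r¹_x - r²_x = ad^R_{φ(x)}`, and
`ω¹(x,y) - ω²(x,y) = l²_x φ(y) + r²_y φ(x) + [φ(x),φ(y)] - φ([x,y]_g)`,
where `ωʲ(x,y) = [σⱼx, σⱼy] - σⱼ[x,y]_g`, `lʲ_x β = [σⱼx, β]`,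
`rʲ_y α = [α, σⱼy]`. -/
theorem cocycle_class_independent_of_splitting
    {K : Type*} [Field K]
    {g : Type*} [AddCommGroup g] [Module K g]
    {G : Type*} [AddCommGroup G] [Module K G]
    (Bg : g →ₗ[K] g →ₗ[K] g)
    (hg : ∀ x y z : g, Bg x (Bg y z) = Bg (Bg x y) z + Bg y (Bg x z))
    (BG : G →ₗ[K] G →ₗ[K] G)
    (hG : ∀ a b c : G, BG a (BG b c) = BG (BG a b) c + BG b (BG a c))
    (p : G →ₗ[K] g) (hp : Function.Surjective ⇑p)
    (hphom : ∀ a b : G, p (BG a b) = Bg (p a) (p b))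
    (σ₁ σ₂ : g →ₗ[K] G)
    (hσ₁ : ∀ x : g, p (σ₁ x) = x) (hσ₂ : ∀ x : g, p (σ₂ x) = x) :
    (∀ x : g, σ₁ x - σ₂ x ∈ LinearMap.ker p) ∧
    (∀ (x : g) (β : G), β ∈ LinearMap.ker p →
        BG (σ₁ x) β - BG (σ₂ x) β = BG (σ₁ x - σ₂ x) β) ∧
    (∀ (x : g) (α : G), α ∈ LinearMap.ker p →
        BG α (σ₁ x) - BG α (σ₂ x) = BG α (σ₁ x - σ₂ x)) ∧
    (∀ x y : g,
        (BG (σ₁ x) (σ₁ y) - σ₁ (Bg x y)) - (BG (σ₂ x) (σ₂ y) - σ₂ (Bg x y)) =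
          BG (σ₂ x) (σ₁ y - σ₂ y) + BG (σ₁ x - σ₂ x) (σ₂ y) +
            BG (σ₁ x - σ₂ x) (σ₁ y - σ₂ y) -
              (σ₁ (Bg x y) - σ₂ (Bg x y))) := by
  refine ⟨fun x => ?_, fun x β _ => ?_, fun x α _ => ?_, fun x y => ?_⟩
  · simp [LinearMap.mem_ker, map_sub, hσ₁, hσ₂]
  · simp [map_sub]
  · simp [map_sub]
  · simp only [map_sub, LinearMap.sub_apply]
    abel
end
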